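/- Let n and k be integers with 2 ≤ k ≤ n−3, and let G be a connected simple graph of order n. If |E(G)| ≥ C(n−k−1, 2) + k + 2, then the conflict-free connection number of G satisfies cfc(G) ≤ k, where C(m,2) = m(m−1)/2 denotes a binomial coefficient. -/

import Mathlib

open SimpleGraph

/-- An edge-coloring `c` with `k` colors makes `G` conflict-free connected if every two
distinct vertices are joined by a path on which some color appears on exactly one edge. -/
def SimpleGraph.IsCFCColoring {V : Type*} (G : SimpleGraph V) {k : ℕ}
    (c : Sym2 V → Fin k) : Prop :=
  ∀ u v : V, u ≠ v → ∃ p : G.Walk u v, p.IsPath ∧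
    ∃ col : Fin k, (p.edges.map c).count col = 1

/-- The conflict-free connection number of `G`: the smallest number of colors in an
edge-coloring of `G` that makes `G` conflict-free connected. -/
noncomputable def SimpleGraph.cfc {V : Type*} (G : SimpleGraph V) : ℕ :=
  sInf {k | ∃ c : Sym2 V → Fin k, G.IsCFCColoring c}

namespace CFCAux

variable {V : Type*}

/-- Adjacency after deleting a single edge. -/
lemma adj_delete_iff (G : SimpleGraph V) (d : Sym2 V) {a b : V} :
    (G \ SimpleGraph.fromEdgeSet {d}).Adj a b ↔ G.Adj a b ∧ s(a, b) ≠ d := by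
  constructor
  · rintro ⟨h, h2⟩
    refine ⟨h, fun hd => h2 ?_⟩
    rw [fromEdgeSet_adj]
    exact ⟨by simp [hd], h.ne⟩
  · rintro ⟨h, hd⟩
    refine ⟨h, fun hcon => ?_⟩
    rw [fromEdgeSet_adj] at hcon
    exact hd (by simpa using hcon.1)

/-- Edge membership after deleting a single edge. -/
lemma edge_mem_delete_iff (G : SimpleGraph V) (d : Sym2 V) {e : Sym2 V} :
    e ∈ (G \ SimpleGraph.fromEdgeSet {d}).edgeSet ↔ e ∈ G.edgeSet ∧ e ≠ d := by
  induction e using Sym2.ind with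
  | _ a b => simp [SimpleGraph.mem_edgeSet, adj_delete_iff]

/-- A walk avoiding an edge `d` witnesses reachability in `G - d`. -/
lemma reachable_delete_of_avoid {G : SimpleGraph V} {d : Sym2 V} {a b : V}
    (p : G.Walk a b) (h : d ∉ p.edges) : (G \ SimpleGraph.fromEdgeSet {d}).Reachable a b := by
  refine ⟨p.transfer _ fun e he => ?_⟩
  exact (edge_mem_delete_iff G d).2 ⟨p.edges_subset_edgeSet he, fun hE => h (hE ▸ he)⟩

/-- If the two endpoints of a deleted edge are still reachable from each other,
then any two `G`-reachable vertices are reachable in `G - e`. -/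
lemma reachable_delete_of_endpoints {G : SimpleGraph V} {z z' : V}
    (hzz' : (G \ SimpleGraph.fromEdgeSet {s(z, z')}).Reachable z z') {a b : V}
    (p : G.Walk a b) : (G \ SimpleGraph.fromEdgeSet {s(z, z')}).Reachable a b := by
  induction p with
  | nil => exact SimpleGraph.Reachable.refl _
  | @cons a x b h q ih =>
    refine SimpleGraph.Reachable.trans ?_ ih
    by_cases hed : s(a, x) = s(z, z')
    · rcases Sym2.eq_iff.1 hed with ⟨rfl, rfl⟩ | ⟨rfl, rfl⟩
      · exact hzz'
      · exact hzz'.symm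
    · exact ((adj_delete_iff G _).2 ⟨h, hed⟩).reachable

/-- Every vertex is reachable from one of the two endpoints of a deleted edge. -/
lemma reachable_delete_side {G : SimpleGraph V} {z z' : V} {a w : V} (p : G.Walk a w) :
    (G \ SimpleGraph.fromEdgeSet {s(z, z')}).Reachable a w ∨
    (G \ SimpleGraph.fromEdgeSet {s(z, z')}).Reachable a z ∨
    (G \ SimpleGraph.fromEdgeSet {s(z, z')}).Reachable a z' := by
  induction p with
  | nil => exact Or.inl (SimpleGraph.Reachable.refl _)
  | @cons a x b h q ih =>
    by_cases hed : s(a, x) = s(z, z')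
    · rcases Sym2.eq_iff.1 hed with ⟨rfl, rfl⟩ | ⟨rfl, rfl⟩
      · exact Or.inr (Or.inl (SimpleGraph.Reachable.refl _))
      · exact Or.inr (Or.inr (SimpleGraph.Reachable.refl _))
    · have hax : (G \ SimpleGraph.fromEdgeSet {s(z, z')}).Reachable a x :=
        ((adj_delete_iff G _).2 ⟨h, hed⟩).reachable
      rcases ih with h1 | h1 | h1
      · exact Or.inl (hax.trans h1)
      · exact Or.inr (Or.inl (hax.trans h1))
      · exact Or.inr (Or.inr (hax.trans h1))

/-- Along a walk from a vertex satisfying `Pr` to one not satisfying it,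
some edge crosses. -/
lemma exists_crossing_step {G : SimpleGraph V} (Pr : V → Prop) {a b : V}
    (p : G.Walk a b) (ha : Pr a) (hb : ¬ Pr b) :
    ∃ x y : V, G.Adj x y ∧ Pr x ∧ ¬ Pr y ∧ s(x, y) ∈ p.edges := by
  induction p with
  | nil => exact absurd ha hb
  | @cons a x b h q ih =>
    by_cases hx : Pr x
    · obtain ⟨x', y', h', hx', hy', hmem⟩ := ih hx hb
      exact ⟨x', y', h', hx', hy', by rw [SimpleGraph.Walk.edges_cons]; exact List.mem_cons_of_mem _ hmem⟩
    · exact ⟨a, x, h, ha, hx, by rw [SimpleGraph.Walk.edges_cons]; exact List.mem_cons_self⟩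

/-- Decompose a walk at an edge it contains. -/
lemma exists_decomp_at_edge {G : SimpleGraph V} {a b : V} (p : G.Walk a b) {e : Sym2 V}
    (he : e ∈ p.edges) :
    ∃ (x y : V) (h : G.Adj x y) (p₁ : G.Walk a x) (p₂ : G.Walk y b),
      p = p₁.append (SimpleGraph.Walk.cons h p₂) ∧ s(x, y) = e := by
  induction p with
  | nil => simp at he
  | @cons a x b h q ih =>
    rw [SimpleGraph.Walk.edges_cons, List.mem_cons] at he
    rcases he with he | he
    · exact ⟨a, x, h, SimpleGraph.Walk.nil, q, by simp, he.symm⟩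
    · obtain ⟨x', y', h', p₁, p₂, hdec, hxy⟩ := ih he
      exact ⟨x', y', h', SimpleGraph.Walk.cons h p₁, p₂, by rw [hdec]; simp, hxy⟩

/-- A bridge is not reachable-around: endpoint version for arbitrary representation. -/
lemma isBridge_not_reachable {G : SimpleGraph V} {e : Sym2 V} (hb : G.IsBridge e)
    {x y : V} (hxy : s(x, y) = e) :
    ¬ (G \ SimpleGraph.fromEdgeSet {e}).Reachable x y := by
  subst hxy
  exact SimpleGraph.isBridge_iff.1 hb

/-- If a trail between `u` and `v` uses a bridge, every walk between `u` and `v` uses it. -/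
lemma bridge_mem_of_mem_trail {G : SimpleGraph V} {e : Sym2 V} (hb : G.IsBridge e)
    {u v : V} {p q : G.Walk u v} (hp : p.IsTrail) (hep : e ∈ p.edges) : e ∈ q.edges := by
  by_contra hq
  have h1 : (G \ SimpleGraph.fromEdgeSet {e}).Reachable u v := reachable_delete_of_avoid q hq
  obtain ⟨x, y, hxy, p₁, p₂, hdec, hse⟩ := exists_decomp_at_edge p hep
  have hnd := hp.edges_nodup
  rw [hdec, SimpleGraph.Walk.edges_append, SimpleGraph.Walk.edges_cons] at hnd
  have h₁ : e ∉ p₁.edges := fun hmem =>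
    (List.disjoint_of_nodup_append hnd) hmem (hse ▸ List.mem_cons_self)
  have h₂ : e ∉ p₂.edges := by
    have := (List.Nodup.of_append_right hnd)
    rw [List.nodup_cons] at this
    exact hse ▸ this.1
  have r1 := reachable_delete_of_avoid p₁ h₁
  have r2 := reachable_delete_of_avoid p₂ h₂
  exact isBridge_not_reachable hb hse (r1.symm.trans (h1.trans r2.symm))

/-- Every connected graph has a spanning tree. -/
lemma exists_spanning_tree [Fintype V] (G : SimpleGraph V) (hc : G.Connected) :
    ∃ T : SimpleGraph V, T ≤ G ∧ T.IsTree := by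
  classical
  suffices H : ∀ (m : ℕ) (G : SimpleGraph V), G.edgeSet.ncard ≤ m → G.Connected →
      ∃ T : SimpleGraph V, T ≤ G ∧ T.IsTree from H _ G le_rfl hc
  intro m
  induction m with
  | zero =>
    intro G hm hcG
    refine ⟨G, le_rfl, hcG, ?_⟩
    intro v p hp
    have hemp : G.edgeSet = ∅ := by
      rw [← Set.ncard_eq_zero (Set.toFinite _)]
      omega
    cases p with
    | nil => exact hp.ne_nil rfl
    | cons h q =>
      have : s(v, _) ∈ G.edgeSet := h
      rw [hemp] at this
      exact this
  | succ m ih =>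
    intro G hm hcG
    by_cases ha : G.IsAcyclic
    · exact ⟨G, le_rfl, hcG, ha⟩
    · rw [SimpleGraph.isAcyclic_iff_forall_edge_isBridge] at ha
      push_neg at ha
      obtain ⟨e, heE, hnb⟩ := ha
      have key : ∀ z z', s(z, z') = e →
          ∃ T : SimpleGraph V, T ≤ G ∧ T.IsTree := by
        intro z z' hzze
        subst hzze
        have hzz' : (G \ SimpleGraph.fromEdgeSet {s(z, z')}).Reachable z z' := by
          rw [SimpleGraph.isBridge_iff] at hnb
          push_neg at hnb
          exact hnb
        have hc' : (G \ SimpleGraph.fromEdgeSet {s(z, z')}).Connected := by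
          have : Nonempty V := hcG.nonempty
          refine SimpleGraph.Connected.mk ?_
          intro a b
          obtain ⟨p⟩ := hcG.preconnected a b
          exact reachable_delete_of_endpoints hzz' p
        have hcard : (G \ SimpleGraph.fromEdgeSet {s(z, z')}).edgeSet.ncard ≤ m := by
          have hds : (G \ SimpleGraph.fromEdgeSet {s(z, z')}).edgeSet
              = G.edgeSet \ {s(z, z')} := by
            ext e'
            simp only [Set.mem_diff, Set.mem_singleton_iff]
            exact edge_mem_delete_iff G _
          rw [hds]
          have h1 := Set.ncard_diff_singleton_of_mem heE
          have h2 : 0 < G.edgeSet.ncard :=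
            (Set.ncard_pos (Set.toFinite _)).2 ⟨_, heE⟩
          omega
        obtain ⟨T, hT, hTt⟩ := ih _ hcard hc'
        exact ⟨T, hT.trans sdiff_le, hTt⟩
      induction e using Sym2.ind with
      | _ z z' => exact key z z' rfl

/-- Every bridge belongs to every spanning connected subgraph. -/
lemma isBridge_mem_of_le {G T : SimpleGraph V} (hT : T ≤ G) (hTc : T.Connected)
    {e : Sym2 V} (hb : G.IsBridge e) : e ∈ T.edgeSet := by
  have key : ∀ z z', s(z, z') = e → e ∈ T.edgeSet := by
    intro z z' hzze
    subst hzze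
    by_contra hne
    have hle : T ≤ G \ SimpleGraph.fromEdgeSet {s(z, z')} := by
      intro a b hab
      exact (adj_delete_iff G _).2 ⟨hT hab, fun hcon => hne (hcon ▸ hab)⟩
    have : (G \ SimpleGraph.fromEdgeSet {s(z, z')}).Reachable z z' :=
      SimpleGraph.Reachable.mono hle (hTc.preconnected z z')
    exact (SimpleGraph.isBridge_iff.1 hb) this
  induction e using Sym2.ind with
  | _ z z' => exact key z z' rfl

/-- Sym2 representation helper. -/
lemma sym2_exists_rep (e : Sym2 V) : ∃ x y : V, s(x, y) = e :=
  Sym2.ind (fun x y => ⟨x, y, rfl⟩) e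

/-- A walk between distinct vertices has an edge. -/
lemma walk_edges_ne_nil {G : SimpleGraph V} {u v : V} (p : G.Walk u v) (h : u ≠ v) :
    p.edges ≠ [] := by
  cases p with
  | nil => exact absurd rfl h
  | cons h q => simp

/-- Counting a uniquely-colored element. -/
lemma count_map_eq_one {k : ℕ} (c : Sym2 V → Fin k) (l : List (Sym2 V)) (hnd : l.Nodup)
    (d : Sym2 V) (hd : d ∈ l) (hothers : ∀ e ∈ l, e ≠ d → c e ≠ c d) :
    (l.map c).count (c d) = 1 := by
  induction l with
  | nil => simp at hd
  | cons a t ih =>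
    rw [List.map_cons, List.count_cons]
    rcases List.mem_cons.1 hd with rfl | hdt
    · have hz : (t.map c).count (c d) = 0 := by
        rw [List.count_eq_zero]
        intro hmem
        rw [List.mem_map] at hmem
        obtain ⟨e, het, hce⟩ := hmem
        exact hothers e (List.mem_cons_of_mem _ het)
          (fun h => (List.nodup_cons.1 hnd).1 (h ▸ het)) hce
      simp [hz]
    · have hne : c a ≠ c d := hothers a (List.mem_cons_self)
        (fun h => (List.nodup_cons.1 hnd).1 (h ▸ hdt))
      rw [ih (List.nodup_cons.1 hnd).2 hdt
        (fun e he hed => hothers e (List.mem_cons_of_mem _ he) hed)]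
      simp [hne]

/-- Main construction: if the number of bridges is at most `k` (and `2 ≤ k`),
then `G` has a conflict-free coloring with `k` colors. -/
lemma main_coloring [Fintype V] (G : SimpleGraph V) (hc : G.Connected) (k : ℕ)
    (hk2 : 2 ≤ k) (hbk : {e : Sym2 V | G.IsBridge e}.ncard ≤ k) :
    ∃ c : Sym2 V → Fin k, G.IsCFCColoring c := by
  classical
  obtain ⟨T, hTG, hTree⟩ := exists_spanning_tree G hc
  set B : Set (Sym2 V) := {e | G.IsBridge e} with hB
  obtain ⟨φ, hφ⟩ : ∃ φ : B → Fin k, Function.Injective φ := by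
    have h2 : Fintype.card B ≤ Fintype.card (Fin k) := by
      rw [Fintype.card_fin, ← Set.toFinset_card, ← Set.ncard_eq_toFinset_card']
      exact hbk
    obtain ⟨f⟩ := Function.Embedding.nonempty_of_card_le h2
    exact ⟨f, f.injective⟩
  have hk0 : 0 < k := by omega
  have hk1 : 1 < k := by omega
  set c0 : Fin k := ⟨0, hk0⟩ with hc0
  set c1 : Fin k := ⟨1, hk1⟩ with hc1
  have hc01 : c0 ≠ c1 := by simp [hc0, hc1, Fin.ext_iff]
  set c : Sym2 V → Fin k := fun e =>
    if h : e ∈ B then φ ⟨e, h⟩ else if e ∈ T.edgeSet then c0 else c1 with hcdef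
  have c_bridge : ∀ e (h : e ∈ B), c e = φ ⟨e, h⟩ := by
    intro e h; simp [hcdef, h]
  have c_tree : ∀ e, e ∉ B → e ∈ T.edgeSet → c e = c0 := by
    intro e h h2; simp [hcdef, h, h2]
  have c_nontree : ∀ e, e ∉ B → e ∉ T.edgeSet → c e = c1 := by
    intro e h h2; simp [hcdef, h, h2]
  have c_inj_bridge : ∀ e₁ e₂, e₁ ∈ B → e₂ ∈ B → c e₁ = c e₂ → e₁ = e₂ := by
    intro e₁ e₂ h₁ h₂ hce
    rw [c_bridge e₁ h₁, c_bridge e₂ h₂] at hce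
    exact Subtype.ext_iff.1 (hφ hce)
  refine ⟨c, ?_⟩
  intro u v huv
  obtain ⟨P, hP, hPuniq⟩ := hTree.existsUnique_path u v
  have hPT : ∀ e ∈ P.edges, e ∈ G.edgeSet :=
    fun e he => SimpleGraph.edgeSet_mono hTG (P.edges_subset_edgeSet he)
  set PG : G.Walk u v := P.transfer G hPT with hPGdef
  have hPGpath : PG.IsPath := hP.transfer _
  have hPGedges : PG.edges = P.edges := P.edges_transfer hPT
  by_cases hS1 : ∃ d ∈ P.edges, d ∈ B ∧ c d ≠ c0
  · obtain ⟨d, hdP, hdB, hdc⟩ := hS1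
    refine ⟨PG, hPGpath, c d, ?_⟩
    refine count_map_eq_one c PG.edges hPGpath.edges_nodup d (hPGedges ▸ hdP) ?_
    intro e he hed
    rw [hPGedges] at he
    by_cases heB : e ∈ B
    · exact fun hcon => hed (c_inj_bridge e d heB hdB hcon)
    · rw [c_tree e heB (P.edges_subset_edgeSet he)]
      exact fun hcon => hdc hcon.symm
  · push_neg at hS1
    have hS1' : ∀ d ∈ P.edges, d ∈ B → c d = c0 := hS1
    by_cases hone : P.edges.length ≤ 1
    · -- single edge
      obtain ⟨e0, he0⟩ : ∃ e0, P.edges = [e0] := by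
        rcases hl : P.edges with _ | ⟨a, t⟩
        · exact absurd hl (walk_edges_ne_nil P huv)
        · rcases t with _ | ⟨b, t'⟩
          · exact ⟨a, rfl⟩
          · rw [hl] at hone; simp at hone
      refine ⟨PG, hPGpath, c e0, ?_⟩
      rw [hPGedges, he0]
      simp
    · -- at least two edges: find a non-bridge edge on P
      obtain ⟨d, hdP, hdB⟩ : ∃ d ∈ P.edges, d ∉ B := by
        by_contra hall
        push_neg at hall
        obtain ⟨a, b, t, hab⟩ : ∃ a b t, P.edges = a :: b :: t := by
          rcases hl : P.edges with _ | ⟨a, t⟩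
          · exact absurd hl (walk_edges_ne_nil P huv)
          · rcases t with _ | ⟨b, t'⟩
            · rw [hl] at hone; simp at hone
            · exact ⟨a, b, t', rfl⟩
        have hamem : a ∈ P.edges := by rw [hab]; simp
        have hbmem : b ∈ P.edges := by rw [hab]; simp
        have hnd := hP.edges_nodup
        rw [hab, List.nodup_cons] at hnd
        have hne : a ≠ b := fun h => hnd.1 (h ▸ List.mem_cons_self)
        have : c a = c b := by
          rw [hS1' a hamem (hall a hamem), hS1' b hbmem (hall b hbmem)]
        exact hne (c_inj_bridge a b (hall a hamem) (hall b hbmem) this)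
      have hdT : d ∈ T.edgeSet := P.edges_subset_edgeSet hdP
      obtain ⟨z, z', hzz⟩ := sym2_exists_rep d
      subst hzz
      set T' : SimpleGraph V := T \ SimpleGraph.fromEdgeSet {s(z, z')} with hT'def
      have hTacyc : ¬ T'.Reachable z z' := by
        have hbT : T.IsBridge s(z, z') :=
          (SimpleGraph.isAcyclic_iff_forall_edge_isBridge.1 hTree.2) hdT
        exact SimpleGraph.isBridge_iff.1 hbT
      have hside : ∀ w, T'.Reachable w z ∨ T'.Reachable w z' := by
        intro w
        obtain ⟨pw⟩ := hTree.1.preconnected w z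
        rcases reachable_delete_side (z := z) (z' := z') pw with h | h | h
        · exact Or.inl h
        · exact Or.inl h
        · exact Or.inr h
      have hopp : ¬ T'.Reachable u v := by
        rintro ⟨W⟩
        have hWT : ∀ e ∈ W.edges, e ∈ T.edgeSet :=
          fun e he => ((edge_mem_delete_iff T _).1 (W.edges_subset_edgeSet he)).1
        have heq : ((W.transfer T hWT).toPath : T.Walk u v) = P :=
          hPuniq _ (W.transfer T hWT).toPath.2
        have hd1 : s(z, z') ∈ ((W.transfer T hWT).toPath : T.Walk u v).edges := by
          rw [heq]; exact hdP
        have hd2 := SimpleGraph.Walk.edges_toPath_subset (W.transfer T hWT) hd1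
        rw [SimpleGraph.Walk.edges_transfer] at hd2
        have hmem := W.edges_subset_edgeSet hd2
        rw [edge_mem_delete_iff] at hmem
        exact hmem.2 rfl
      have build : ∀ y y' : V, s(y, y') = s(z, z') → T'.Reachable u y → T'.Reachable v y' →
          ∃ p : G.Walk u v, p.IsPath ∧ ∃ col : Fin k, (p.edges.map c).count col = 1 := by
        intro y y' hyy hu hv
        have hyT : s(y, y') ∈ T.edgeSet := hyy ▸ hdT
        have hyG : G.Adj y y' := (SimpleGraph.mem_edgeSet _).1 (SimpleGraph.edgeSet_mono hTG hyT)
        have hynb : ¬ G.IsBridge s(y, y') := by rw [hyy]; exact hdB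
        have hreach : (G \ SimpleGraph.fromEdgeSet {s(y, y')}).Reachable y y' := by
          rw [SimpleGraph.isBridge_iff] at hynb
          push_neg at hynb
          exact hynb
        have hnr : ¬ T'.Reachable y y' := by
          rcases Sym2.eq_iff.1 hyy with ⟨rfl, rfl⟩ | ⟨rfl, rfl⟩
          · exact hTacyc
          · exact fun h => hTacyc h.symm
        have hside' : ∀ w, T'.Reachable w y ∨ T'.Reachable w y' := by
          intro w
          rcases Sym2.eq_iff.1 hyy with ⟨rfl, rfl⟩ | ⟨rfl, rfl⟩
          · exact hside w
          · exact (hside w).symm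
        obtain ⟨W0⟩ := hreach
        obtain ⟨x, x', hxx', hx, hx', -⟩ :=
          exists_crossing_step (fun w => T'.Reachable y w) W0 (SimpleGraph.Reachable.refl _)
            (fun h => hnr h)
        have hfG : G.Adj x x' := ((adj_delete_iff G _).1 hxx').1
        have hfd : s(x, x') ≠ s(y, y') := ((adj_delete_iff G _).1 hxx').2
        have hfT : s(x, x') ∉ T.edgeSet := by
          intro hmem
          have hadj : T'.Adj x x' := by
            rw [hT'def, adj_delete_iff]
            exact ⟨(SimpleGraph.mem_edgeSet _).1 hmem, by rw [← hyy]; exact hfd⟩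
          exact hx' (hx.trans hadj.reachable)
        have hfB : s(x, x') ∉ B := fun hmem => hfT (isBridge_mem_of_le hTG hTree.1 hmem)
        have hcf : c s(x, x') = c1 := c_nontree _ hfB hfT
        obtain ⟨W1⟩ : T'.Reachable u x := hu.trans hx
        obtain ⟨W2⟩ : T'.Reachable x' v := by
          rcases hside' x' with h | h
          · exact absurd h.symm hx'
          · exact h.trans hv.symm
        have hW1G : ∀ e ∈ W1.edges, e ∈ G.edgeSet := fun e he =>
          SimpleGraph.edgeSet_mono hTG ((edge_mem_delete_iff T _).1 (W1.edges_subset_edgeSet he)).1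
        have hW2G : ∀ e ∈ W2.edges, e ∈ G.edgeSet := fun e he =>
          SimpleGraph.edgeSet_mono hTG ((edge_mem_delete_iff T _).1 (W2.edges_subset_edgeSet he)).1
        set WG : G.Walk u v := (W1.transfer G hW1G).append
          (SimpleGraph.Walk.cons hfG (W2.transfer G hW2G)) with hWGdef
        have hWGedges : ∀ e ∈ WG.edges, e = s(x, x') ∨ e ∈ T'.edgeSet := by
          intro e he
          rw [hWGdef, SimpleGraph.Walk.edges_append, SimpleGraph.Walk.edges_cons] at he
          rcases List.mem_append.1 he with h | h
          · rw [SimpleGraph.Walk.edges_transfer] at h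
            exact Or.inr (W1.edges_subset_edgeSet h)
          · rcases List.mem_cons.1 h with h | h
            · exact Or.inl h
            · rw [SimpleGraph.Walk.edges_transfer] at h
              exact Or.inr (W2.edges_subset_edgeSet h)
        have hQpath : (WG.toPath : G.Walk u v).IsPath := WG.toPath.2
        have hQsub : ∀ e ∈ (WG.toPath : G.Walk u v).edges, e ∈ WG.edges :=
          fun e he => SimpleGraph.Walk.edges_toPath_subset WG he
        have hfQ : s(x, x') ∈ (WG.toPath : G.Walk u v).edges := by
          by_contra hnotin
          have hQT' : ∀ e ∈ (WG.toPath : G.Walk u v).edges, e ∈ T'.edgeSet := by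
            intro e he
            rcases hWGedges e (hQsub e he) with rfl | h
            · exact absurd he hnotin
            · exact h
          exact hopp ⟨(WG.toPath : G.Walk u v).transfer T' hQT'⟩
        refine ⟨(WG.toPath : G.Walk u v), hQpath, c s(x, x'), ?_⟩
        refine count_map_eq_one c _ hQpath.edges_nodup s(x, x') hfQ ?_
        intro e he hne
        rcases hWGedges e (hQsub e he) with rfl | hT'mem
        · exact absurd rfl hne
        · have heT : e ∈ T.edgeSet := ((edge_mem_delete_iff T _).1 hT'mem).1
          by_cases heB : e ∈ B
          · have heBr : G.IsBridge e := heB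
            have hePG : e ∈ PG.edges :=
              bridge_mem_of_mem_trail heBr hQpath.isTrail he
            have heP : e ∈ P.edges := by rw [← hPGedges]; exact hePG
            rw [hS1' e heP heB, hcf]
            exact hc01
          · rw [c_tree e heB heT, hcf]
            exact hc01
      rcases hside u with hu | hu <;> rcases hside v with hv | hv
      · exact absurd (hu.trans hv.symm) hopp
      · exact build z z' rfl hu hv
      · exact build z' z Sym2.eq_swap hu hv
      · exact absurd (hu.trans hv.symm) hopp

/-- `C(m+1,2) = C(m,2) + m`. -/
lemma choose_two_succ (m : ℕ) : (m + 1).choose 2 = m.choose 2 + m := by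
  have h := Nat.choose_succ_succ m 1
  rw [Nat.choose_one_right] at h
  exact h.trans (Nat.add_comm _ _)

/-- Merging inequality for binomial coefficients. -/
lemma choose_two_merge (x y : ℕ) (hx : 1 ≤ x) (hy : 1 ≤ y) :
    x.choose 2 + y.choose 2 ≤ (x + y - 1).choose 2 := by
  obtain ⟨a, rfl⟩ : ∃ a, x = a + 1 := ⟨x - 1, by omega⟩
  obtain ⟨b, rfl⟩ : ∃ b, y = b + 1 := ⟨y - 1, by omega⟩
  have key : ∀ a b : ℕ, (a + b + 1).choose 2 = (a + 1).choose 2 + (b + 1).choose 2 + a * b := by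
    intro a b
    induction a with
    | zero => simp [show Nat.choose 1 2 = 0 from rfl]
    | succ a iha =>
      have h1 : a + 1 + b + 1 = (a + b + 1) + 1 := by omega
      rw [h1, choose_two_succ, iha, choose_two_succ (a + 1), Nat.succ_mul]
      generalize (a + 1).choose 2 = X
      generalize (b + 1).choose 2 = Y
      omega
  have h2 : a + 1 + (b + 1) - 1 = a + b + 1 := by omega
  rw [h2, key]
  exact Nat.le_add_right _ _

/-- Convexity: sum of `C(fᵢ,2)` over a family of positive sizes. -/
lemma sum_choose_two_le {α : Type*} [DecidableEq α] (s : Finset α) (f : α → ℕ)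
    (hf : ∀ i ∈ s, 1 ≤ f i) :
    ∑ i ∈ s, (f i).choose 2 ≤ ((∑ i ∈ s, f i) + 1 - s.card).choose 2 := by
  induction s using Finset.induction_on with
  | empty => simp
  | @insert a s ha ih =>
    rw [Finset.sum_insert ha, Finset.sum_insert ha, Finset.card_insert_of_notMem ha]
    have hs : s.card ≤ ∑ i ∈ s, f i := by
      calc s.card = ∑ _i ∈ s, 1 := by simp
      _ ≤ ∑ i ∈ s, f i := Finset.sum_le_sum (fun i hi => hf i (Finset.mem_insert_of_mem hi))
    have h1 : (f a).choose 2 + (∑ i ∈ s, (f i).choose 2) ≤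
        (f a).choose 2 + ((∑ i ∈ s, f i) + 1 - s.card).choose 2 :=
      Nat.add_le_add_left (ih (fun i hi => hf i (Finset.mem_insert_of_mem hi))) _
    refine h1.trans ?_
    have h2 := choose_two_merge (f a) ((∑ i ∈ s, f i) + 1 - s.card)
      (hf a (Finset.mem_insert_self a s)) (by omega)
    refine h2.trans (le_of_eq ?_)
    congr 1
    omega

/-- Edges with both (distinct) endpoints inside `A` number at most `C(|A|,2)`. -/
lemma edges_in_class_bound [DecidableEq V] (A : Finset V) (E : Finset (Sym2 V))
    (hnd : ∀ e ∈ E, ¬ e.IsDiag) (hsub : ∀ e ∈ E, e ∈ A.sym2) :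
    E.card ≤ A.card.choose 2 := by
  have hdisj : Disjoint E (A.image Sym2.diag) := by
    rw [Finset.disjoint_right]
    intro e he
    rw [Finset.mem_image] at he
    obtain ⟨a, _, rfl⟩ := he
    intro hE
    exact hnd _ hE (Sym2.diag_isDiag a)
  have hsub2 : E ∪ A.image Sym2.diag ⊆ A.sym2 := by
    intro e he
    rcases Finset.mem_union.1 he with h | h
    · exact hsub e h
    · rw [Finset.mem_image] at h
      obtain ⟨a, ha, rfl⟩ := h
      exact Finset.diag_mem_sym2_iff.2 ha
  have hcard := Finset.card_le_card hsub2
  rw [Finset.card_union_of_disjoint hdisj,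
    Finset.card_image_of_injective _ Sym2.diag_injective, Finset.card_sym2,
    choose_two_succ] at hcard
  omega

/-- Antitone chain for `b ↦ b + C(n-b, 2)` on `[k+1, n-1]`. -/
lemma arith_chain (n k : ℕ) : ∀ b, k + 1 ≤ b → b ≤ n - 1 →
    b + (n - b).choose 2 ≤ (k + 1) + (n - k - 1).choose 2 := by
  intro b hb
  induction b, hb using Nat.le_induction with
  | base =>
    intro _
    have h : n - (k + 1) = n - k - 1 := by omega
    rw [h]
  | succ b hb ih =>
    intro hble
    have h2 := ih (by omega)
    have h1 : n - b = (n - (b + 1)) + 1 := by omega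
    rw [h1, choose_two_succ] at h2
    generalize hX : (n - (b + 1)).choose 2 = X at h2 ⊢
    generalize (n - k - 1).choose 2 = Y at h2 ⊢
    omega

/-- In a connected graph every bridge is an edge. -/
lemma bridge_mem_edgeSet_of_connected {G : SimpleGraph V} (hc : G.Connected) {e : Sym2 V}
    (hb : G.IsBridge e) : e ∈ G.edgeSet := by
  induction e using Sym2.ind with
  | _ a b => exact hb.reachable_iff_adj.1 (hc.preconnected a b)

/-- Counting: lots of edges force few bridges. -/
lemma bridges_le [Fintype V] (G : SimpleGraph V) (n k : ℕ)
    (hn : Fintype.card V = n) (hk2 : 2 ≤ k) (hk : k ≤ n - 3) (hc : G.Connected)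
    (he : (n - k - 1).choose 2 + k + 2 ≤ G.edgeSet.ncard) :
    {e : Sym2 V | G.IsBridge e}.ncard ≤ k := by
  classical
  by_contra hcon
  push_neg at hcon
  obtain ⟨r⟩ : Nonempty V := hc.nonempty
  set B : Set (Sym2 V) := {e : Sym2 V | G.IsBridge e} with hBdef
  have hBfin : B.Finite := Set.toFinite _
  have hEfin : G.edgeSet.Finite := Set.toFinite _
  set BF : Finset (Sym2 V) := hBfin.toFinset with hBF
  set EF : Finset (Sym2 V) := hEfin.toFinset with hEF
  have hBsubE : BF ⊆ EF := by
    intro e he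
    rw [hBF, Set.Finite.mem_toFinset] at he
    rw [hEF, Set.Finite.mem_toFinset]
    exact bridge_mem_edgeSet_of_connected hc he
  set b : ℕ := BF.card with hb
  have hbncard : B.ncard = b := Set.ncard_eq_toFinset_card B hBfin
  set rS : Sym2 V → V → Prop :=
    fun d w => (G \ SimpleGraph.fromEdgeSet {d}).Reachable r w with hrS
  set ψ : V → Set (Sym2 V) := fun w => {d : Sym2 V | d ∈ B ∧ ¬ rS d w} with hψ
  have fact_adj : ∀ a b' : V, G.Adj a b' → s(a, b') ∉ B → ψ a = ψ b' := by
    intro a b' hab hnB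
    ext d
    simp only [hψ, Set.mem_setOf_eq]
    refine and_congr_right fun hdB => not_congr ?_
    have hne : s(a, b') ≠ d := fun h => hnB (by rw [hBdef, h]; exact hdB)
    have hadj : (G \ SimpleGraph.fromEdgeSet {d}).Adj a b' := (adj_delete_iff G d).2 ⟨hab, hne⟩
    exact ⟨fun h => h.trans hadj.reachable, fun h => h.trans hadj.symm.reachable⟩
  have hψr : ψ r = ∅ := by
    ext d
    simp only [hψ, Set.mem_setOf_eq, Set.mem_empty_iff_false, iff_false, not_and, not_not]
    intro _
    exact SimpleGraph.Reachable.refl r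
  have fact_bridge : ∀ d ∈ B, ∃ z z' : V, s(z, z') = d ∧ rS d z ∧ ¬ rS d z' := by
    intro d hd
    obtain ⟨z, z', hzz⟩ := sym2_exists_rep d
    subst hzz
    have hnr : ¬ (G \ SimpleGraph.fromEdgeSet {s(z, z')}).Reachable z z' :=
      SimpleGraph.isBridge_iff.1 hd
    obtain ⟨p⟩ := hc.preconnected r z
    rcases reachable_delete_side (z := z) (z' := z') p with h | h | h
    · exact ⟨z, z', rfl, h, fun h2 => hnr (h.symm.trans h2)⟩
    · exact ⟨z, z', rfl, h, fun h2 => hnr (h.symm.trans h2)⟩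
    · exact ⟨z', z, Sym2.eq_swap, h, fun h2 => hnr (h2.symm.trans h)⟩
  choose fnear ffar hfs hfnear hffar using fact_bridge
  set CL : Finset (Set (Sym2 V)) := Finset.image ψ Finset.univ with hCL
  have hψrCL : ψ r ∈ CL := by
    rw [hCL]; exact Finset.mem_image_of_mem ψ (Finset.mem_univ r)
  set χ : Sym2 V → Set (Sym2 V) := fun d => if h : d ∈ B then ψ (ffar d h) else ∅ with hχ
  have hχval : ∀ d (h : d ∈ B), χ d = ψ (ffar d h) := by
    intro d h; simp only [hχ, dif_pos h]
  have hχmem : ∀ d ∈ BF, χ d ∈ CL.erase (ψ r) := by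
    intro d hd
    rw [hBF, Set.Finite.mem_toFinset] at hd
    rw [hχval d hd]
    refine Finset.mem_erase.2 ⟨?_, by rw [hCL]; exact Finset.mem_image_of_mem ψ (Finset.mem_univ _)⟩
    intro hcontra
    have hdmem : d ∈ ψ (ffar d hd) := ⟨hd, hffar d hd⟩
    rw [hcontra, hψr] at hdmem
    exact hdmem
  have hχinj : Set.InjOn χ ↑BF := by
    intro d₁ h₁ d₂ h₂ heq
    rw [Finset.mem_coe, hBF, Set.Finite.mem_toFinset] at h₁ h₂
    by_contra hne
    rw [hχval d₁ h₁, hχval d₂ h₂] at heq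
    have hd1x2 : ¬ rS d₁ (ffar d₂ h₂) := by
      have hmem : d₁ ∈ ψ (ffar d₁ h₁) := ⟨h₁, hffar d₁ h₁⟩
      rw [heq] at hmem
      exact hmem.2
    have hd2x1 : ¬ rS d₂ (ffar d₁ h₁) := by
      have hmem : d₂ ∈ ψ (ffar d₂ h₂) := ⟨h₂, hffar d₂ h₂⟩
      rw [← heq] at hmem
      exact hmem.2
    have hd1y2 : ¬ rS d₁ (fnear d₂ h₂) := by
      intro hry2
      have hadj2 : G.Adj (fnear d₂ h₂) (ffar d₂ h₂) := by
        have h1 := hfs d₂ h₂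
        have hd2E : d₂ ∈ G.edgeSet := bridge_mem_edgeSet_of_connected hc h₂
        rw [← h1] at hd2E
        exact (SimpleGraph.mem_edgeSet _).1 hd2E
      have hne12 : s(fnear d₂ h₂, ffar d₂ h₂) ≠ d₁ := by
        rw [hfs d₂ h₂]
        exact fun h => hne h.symm
      have hstep : (G \ SimpleGraph.fromEdgeSet {d₁}).Adj (fnear d₂ h₂) (ffar d₂ h₂) :=
        (adj_delete_iff G d₁).2 ⟨hadj2, hne12⟩
      exact hd1x2 (hry2.trans hstep.reachable)
    obtain ⟨W⟩ : (G \ SimpleGraph.fromEdgeSet {d₂}).Reachable r (fnear d₂ h₂) := hfnear d₂ h₂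
    obtain ⟨a, a', haa', hra, hra', hmem⟩ :=
      exists_crossing_step (fun w => rS d₁ w) W (SimpleGraph.Reachable.refl r) hd1y2
    have hsa : s(a, a') = d₁ := by
      by_contra hsa
      have hstep : (G \ SimpleGraph.fromEdgeSet {d₁}).Adj a a' :=
        (adj_delete_iff G d₁).2 ⟨((adj_delete_iff G d₂).1 haa').1, hsa⟩
      exact hra' (hra.trans hstep.reachable)
    have hx1W : ffar d₁ h₁ ∈ W.support := by
      have h1 : s(fnear d₁ h₁, ffar d₁ h₁) = s(a, a') := (hfs d₁ h₁).trans hsa.symm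
      rcases Sym2.eq_iff.1 h1 with ⟨hy, hx⟩ | ⟨hy, hx⟩
      · rw [hx]
        exact SimpleGraph.Walk.snd_mem_support_of_mem_edges W hmem
      · rw [hx]
        exact SimpleGraph.Walk.fst_mem_support_of_mem_edges W hmem
    exact hd2x1 ⟨W.takeUntil _ hx1W⟩
  have hcardle : b ≤ (CL.erase (ψ r)).card :=
    Finset.card_le_card_of_injOn χ hχmem hχinj
  have hCLb : b + 1 ≤ CL.card := by
    have h1 := Finset.card_erase_of_mem hψrCL
    have h2 : 0 < CL.card := Finset.card_pos.2 ⟨ψ r, hψrCL⟩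
    omega
  have hCLn : CL.card ≤ n := by
    rw [← hn, ← Finset.card_univ]
    exact Finset.card_image_le
  have hfib : ∑ S ∈ CL, (Finset.univ.filter (fun w => ψ w = S)).card = n := by
    rw [← hn, ← Finset.card_univ]
    exact (Finset.card_eq_sum_card_fiberwise
      (fun x _ => Finset.mem_image_of_mem ψ (Finset.mem_univ x))).symm
  set g : Sym2 V → Set (Sym2 V) :=
    Sym2.lift ⟨fun a b' => ψ a ∪ ψ b', fun a b' => Set.union_comm _ _⟩ with hg
  set NBF : Finset (Sym2 V) := EF \ BF with hNBF
  have hNBFprop : ∀ e ∈ NBF, e ∈ G.edgeSet ∧ e ∉ B := by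
    intro e he
    rw [hNBF, Finset.mem_sdiff, hEF, Set.Finite.mem_toFinset, hBF, Set.Finite.mem_toFinset] at he
    exact he
  have hgval : ∀ a b' : V, G.Adj a b' → s(a, b') ∉ B → g s(a, b') = ψ a := by
    intro a b' hadj hnB
    have hEq : ψ a = ψ b' := fact_adj a b' hadj hnB
    simp only [hg, Sym2.lift_mk]
    rw [← hEq, Set.union_self]
  have hgmem : ∀ e ∈ NBF, g e ∈ CL := by
    intro e he
    obtain ⟨heE, heB⟩ := hNBFprop e he
    obtain ⟨a, b', rfl⟩ := sym2_exists_rep e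
    rw [hgval a b' ((SimpleGraph.mem_edgeSet _).1 heE) heB, hCL]
    exact Finset.mem_image_of_mem ψ (Finset.mem_univ _)
  have hsplit : EF.card = b + NBF.card := by
    have h1 := Finset.card_sdiff_add_card_eq_card hBsubE
    rw [hNBF]
    omega
  have hNBFbound : NBF.card ≤ ((n + 1) - CL.card).choose 2 := by
    rw [Finset.card_eq_sum_card_fiberwise hgmem]
    have hperclass : ∀ S ∈ CL, (NBF.filter (fun e => g e = S)).card ≤
        ((Finset.univ.filter (fun w => ψ w = S)).card).choose 2 := by
      intro S hS
      refine edges_in_class_bound _ _ ?_ ?_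
      · intro e he
        rw [Finset.mem_filter] at he
        exact G.not_isDiag_of_mem_edgeSet (hNBFprop e he.1).1
      · intro e he
        rw [Finset.mem_filter] at he
        obtain ⟨heN, hgS⟩ := he
        obtain ⟨heE, heB⟩ := hNBFprop e heN
        obtain ⟨a, b', rfl⟩ := sym2_exists_rep e
        have hadj : G.Adj a b' := (SimpleGraph.mem_edgeSet _).1 heE
        have hga : g s(a, b') = ψ a := hgval a b' hadj heB
        have hgb : ψ a = ψ b' := fact_adj a b' hadj heB
        rw [Finset.mk_mem_sym2_iff]
        constructor
        · rw [Finset.mem_filter]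
          exact ⟨Finset.mem_univ _, hga.symm.trans hgS⟩
        · rw [Finset.mem_filter]
          exact ⟨Finset.mem_univ _, hgb.symm.trans (hga.symm.trans hgS)⟩
    have hsum := Finset.sum_le_sum hperclass
    refine hsum.trans ?_
    have hpos : ∀ S ∈ CL, 1 ≤ (Finset.univ.filter (fun w => ψ w = S)).card := by
      intro S hS
      rw [hCL, Finset.mem_image] at hS
      obtain ⟨w, _, rfl⟩ := hS
      refine Finset.card_pos.2 ⟨w, ?_⟩
      rw [Finset.mem_filter]
      exact ⟨Finset.mem_univ _, rfl⟩
    have h2 := sum_choose_two_le CL (fun S => (Finset.univ.filter (fun w => ψ w = S)).card) hpos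
    rw [hfib] at h2
    exact h2
  have hEcard : G.edgeSet.ncard = EF.card := Set.ncard_eq_toFinset_card _ hEfin
  have hchain : (n + 1) - CL.card ≤ n - b := by omega
  have hmono : ((n + 1) - CL.card).choose 2 ≤ (n - b).choose 2 :=
    Nat.choose_le_choose 2 hchain
  have hfinal := arith_chain n k b (by omega) (by omega)
  have htotal : G.edgeSet.ncard ≤ k + 1 + (n - k - 1).choose 2 := by
    rw [hEcard, hsplit]
    have h1 : NBF.card ≤ (n - b).choose 2 := hNBFbound.trans hmono
    generalize hX : (n - b).choose 2 = X at h1 hfinal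
    generalize hY : (n - k - 1).choose 2 = Y at hfinal ⊢
    omega
  generalize hY : (n - k - 1).choose 2 = Y at htotal he
  omega

end CFCAux

/-- For `2 ≤ k ≤ n - 3`, every connected graph `G` of order `n` with at least
`C(n-k-1, 2) + k + 2` edges satisfies `cfc(G) ≤ k`. -/
theorem stmt_6 {V : Type*} [Fintype V] (G : SimpleGraph V) (n k : ℕ)
    (hn : Fintype.card V = n) (hk2 : 2 ≤ k) (hk : k ≤ n - 3) (hc : G.Connected)
    (he : (n - k - 1).choose 2 + k + 2 ≤ G.edgeSet.ncard) :
    G.cfc ≤ k := by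
  obtain ⟨c, hcfc⟩ := CFCAux.main_coloring G hc k hk2
    (CFCAux.bridges_le G n k hn hk2 hk hc he)
  exact Nat.sInf_le ⟨c, hcfc⟩
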